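/- Let $B>0$, $d\ge 2$, and $t_1<t_2<\cdots<t_d$. Then $\int_{t_1}^{t_2}\cdots\int_{t_{d-1}}^{t_d} e^{-\frac{B}{d-1}(s_1+\cdots+s_{d-1})}\prod_{1\le i<j\le d-1}(s_j-s_i)\,ds_{d-1}\cdots ds_1 \;\ge\; c_d\, e^{-\frac{B}{d}(t_1+\cdots+t_d)}\, e^{c_d B(t_d-t_1)}\prod_{1\le i<j\le d}(t_j-t_i)$, for a constant $c_d>0$ depending only on $d$. -/

import Mathlib

open MeasureTheory Finset

private lemma le_exp_self (x : ℝ) : x ≤ Real.exp x :=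
  le_trans (by linarith) (Real.add_one_le_exp x)

private lemma pairAdj {B β h : ℝ} (hB : 0 < B) (hβ : 0 < β) (hβ1 : β ≤ 1) (hh : 0 < h) :
    β / 4 * h ≤ min h (1 / B) / 4 * Real.exp (β * B * h) := by
  rcases le_total h (1 / B) with hc | hc
  · rw [min_eq_left hc]
    have h1 : (1 : ℝ) ≤ Real.exp (β * B * h) := Real.one_le_exp (by positivity)
    nlinarith
  · rw [min_eq_right hc]
    have h1 : β * B * h ≤ Real.exp (β * B * h) := le_exp_self _
    have h2 : (0:ℝ) < 1 / B := by positivity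
    have h3 : 1 / B / 4 * (β * B * h) = β / 4 * h := by field_simp
    nlinarith
  
private lemma pairNon {B β z h : ℝ} (hB : 0 < B) (hβ : 0 < β) (hβ1 : β ≤ 1)
    (hz : 0 ≤ z) (hh : 0 < h) :
    β / 4 * (z + h) ≤ (z + min h (1 / B)) / 4 * Real.exp (β * B * (z + h)) := by
  rcases le_total h (1 / B) with hc | hc
  · rw [min_eq_left hc]
    have h1 : (1 : ℝ) ≤ Real.exp (β * B * (z + h)) := Real.one_le_exp (by positivity)
    nlinarith
  · rw [min_eq_right hc]
    have h1 : β * B * (z + h) ≤ Real.exp (β * B * (z + h)) := le_exp_self _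
    have h2 : (0:ℝ) < 1 / B := by positivity
    have h4 : 1 ≤ B * h := by
      rw [div_le_iff₀ hB] at hc
      linarith [mul_comm h B]
    -- (z + 1/B)/4 * (β B (z+h)) = β/4 ((zB+1)(z+h)) ≥ β/4 (z+h)
    have h5 : (z + 1 / B) / 4 * (β * B * (z + h)) = β / 4 * ((z * B + 1) * (z + h)) := by
      field_simp
    have h6 : (z + h) ≤ (z * B + 1) * (z + h) := by
      nlinarith [mul_nonneg (mul_nonneg hz hB.le) (by linarith : (0:ℝ) ≤ z + h)]
    have h7 : 0 ≤ z + 1 / B := by positivity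
    calc β / 4 * (z + h) ≤ β / 4 * ((z * B + 1) * (z + h)) := by nlinarith
      _ = (z + 1 / B) / 4 * (β * B * (z + h)) := h5.symm
      _ ≤ (z + 1 / B) / 4 * Real.exp (β * B * (z + h)) := by
          apply mul_le_mul_of_nonneg_left h1 (by positivity)

private lemma finShiftSum (n : ℕ) (g : ℕ → ℝ) :
    ∑ j : Fin n, g ((j : ℕ) + 1) = ∑ k ∈ Finset.Icc 1 n, g k := by
  refine Finset.sum_bij' (fun (j : Fin n) _ => (j : ℕ) + 1)
    (fun k hk => (⟨k - 1, by simp only [Finset.mem_Icc] at hk; omega⟩ : Fin n))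
    ?_ ?_ ?_ ?_ ?_
  · intro a _; simp only [Finset.mem_Icc]; have := a.isLt; omega
  · intro a _; exact Finset.mem_univ _
  · intro a _; apply Fin.ext; simp
  · intro a ha; simp only [Finset.mem_Icc] at ha; simp; omega
  · intro a _; rfl

private lemma finShiftProd (n : ℕ) (g : ℕ → ℝ) :
    ∏ j : Fin n, g ((j : ℕ) + 1) = ∏ k ∈ Finset.Icc 1 n, g k := by
  refine Finset.prod_bij' (fun (j : Fin n) _ => (j : ℕ) + 1)
    (fun k hk => (⟨k - 1, by simp only [Finset.mem_Icc] at hk; omega⟩ : Fin n))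
    ?_ ?_ ?_ ?_ ?_
  · intro a _; simp only [Finset.mem_Icc]; have := a.isLt; omega
  · intro a _; exact Finset.mem_univ _
  · intro a _; apply Fin.ext; simp
  · intro a ha; simp only [Finset.mem_Icc] at ha; simp; omega
  · intro a _; rfl

set_option maxHeartbeats 1000000 in
theorem stmt15 (d : ℕ) (hd : 2 ≤ d) :
    ∃ c : ℝ, 0 < c ∧ ∀ B : ℝ, 0 < B → ∀ t : ℕ → ℝ,
      (∀ i, 1 ≤ i → i < d → t i < t (i + 1)) →
      c * Real.exp (-(B / d) * ∑ i ∈ Finset.Icc 1 d, t i) *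
          Real.exp (c * B * (t d - t 1)) *
          ∏ p ∈ (Finset.Icc 1 d ×ˢ Finset.Icc 1 d).filter (fun p => p.1 < p.2),
            (t p.2 - t p.1)
        ≤ ∫ s in Set.univ.pi (fun j : Fin (d - 1) =>
              Set.Icc (t ((j : ℕ) + 1)) (t ((j : ℕ) + 2))),
            Real.exp (-(B / ((d : ℝ) - 1)) * ∑ j, s j) *
              ∏ p ∈ Finset.univ.filter (fun p : Fin (d - 1) × Fin (d - 1) => p.1 < p.2),
                (s p.2 - s p.1) := by
  set D : ℝ := (d : ℝ) with hDdef
  have hD2 : (2:ℝ) ≤ D := by rw [hDdef]; exact_mod_cast hd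
  have hD0 : (0:ℝ) < D := by linarith
  have hD1 : (0:ℝ) < D - 1 := by linarith
  have hDne : D ≠ 0 := ne_of_gt hD0
  have hD1ne : D - 1 ≠ 0 := ne_of_gt hD1
  have hcast1 : ((d - 1 : ℕ) : ℝ) = D - 1 := by
    rw [hDdef]; exact_mod_cast Nat.cast_sub (by omega : 1 ≤ d)
  set α : ℝ := 1 / (2 * D * (D - 1)) with hαdef
  have hα0 : 0 < α := by rw [hαdef]; apply div_pos one_pos; nlinarith
  set β : ℝ := α / D with hβdef
  have hβ0 : 0 < β := div_pos hα0 hD0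
  have hβ1 : β ≤ 1 := by
    have h1 : α ≤ 1 := by
      rw [hαdef]; rw [div_le_one (by nlinarith)]; nlinarith
    have h2 : β ≤ α := by
      rw [hβdef]; exact div_le_self hα0.le (by linarith)
    linarith
  set T : Finset (ℕ × ℕ) :=
    (Finset.Icc 1 d ×ˢ Finset.Icc 1 d).filter (fun p => p.1 < p.2) with hTdef
  have hmemT : ∀ p : ℕ × ℕ, p ∈ T ↔
      (1 ≤ p.1 ∧ p.1 ≤ d ∧ 1 ≤ p.2 ∧ p.2 ≤ d ∧ p.1 < p.2) := by
    intro p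
    rw [hTdef, Finset.mem_filter, Finset.mem_product, Finset.mem_Icc, Finset.mem_Icc]
    omega
  set c : ℝ := min α (Real.exp (-(1/2)) * (β / 4) ^ (d * d)) with hcdef
  have hc0 : 0 < c := lt_min hα0 (by positivity)
  refine ⟨c, hc0, ?_⟩
  intro B hB t ht
  -- monotonicity
  have tle : ∀ a b : ℕ, 1 ≤ a → a ≤ b → b ≤ d → t a ≤ t b := by
    intro a b ha hab hbd
    induction b with
    | zero => exact absurd (ha.trans hab) (by omega)
    | succ b ih =>
      rcases Nat.eq_or_lt_of_le hab with h | h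
      · exact le_of_eq (congrArg t h)
      · have hab' : a ≤ b := by omega
        exact (ih hab' (by omega)).trans (le_of_lt (ht b (by omega) (by omega)))
  have tlt : ∀ a b : ℕ, 1 ≤ a → a < b → b ≤ d → t a < t b := by
    intro a b ha hab hbd
    have h2 : t (b-1) < t (b-1+1) := ht (b-1) (by omega) (by omega)
    rw [show b - 1 + 1 = b from by omega] at h2
    exact lt_of_le_of_lt (tle a (b-1) ha (by omega) (by omega)) h2
  -- sub-box data
  set δ : ℕ → ℝ := fun k => min (t (k+1) - t k) (1 / B) with hδdef
  set av : ℕ → ℝ := fun k => t k + δ k / 4 with havdef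
  set bv : ℕ → ℝ := fun k => t k + δ k / 2 with hbvdef
  have hδpos : ∀ k, 1 ≤ k → k < d → 0 < δ k := by
    intro k h1 h2
    exact lt_min (sub_pos.2 (ht k h1 h2)) (by positivity)
  have hδle : ∀ k, δ k ≤ t (k+1) - t k := fun k => min_le_left _ _
  have hδB : ∀ k, δ k ≤ 1 / B := fun k => min_le_right _ _
  set VP : Finset (Fin (d-1) × Fin (d-1)) :=
    Finset.univ.filter (fun p : Fin (d - 1) × Fin (d - 1) => p.1 < p.2) with hVPdef
  set box := Set.univ.pi (fun j : Fin (d - 1) =>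
      Set.Icc (t ((j : ℕ) + 1)) (t ((j : ℕ) + 2))) with hboxdef
  set K := Set.univ.pi (fun j : Fin (d - 1) =>
      Set.Icc (av ((j : ℕ) + 1)) (bv ((j : ℕ) + 1))) with hKdef
  have hjd : ∀ j : Fin (d-1), (j:ℕ) + 1 < d := fun j => by have := j.isLt; omega
  have hsub : K ⊆ box := by
    intro s hs
    rw [hKdef, Set.mem_univ_pi] at hs
    rw [hboxdef, Set.mem_univ_pi]
    intro j
    have h1 := hs j
    rw [Set.mem_Icc] at h1 ⊢
    have hδj := hδpos ((j:ℕ)+1) (by omega) (hjd j)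
    have hδl := hδle ((j:ℕ)+1)
    constructor
    · have : t ((j:ℕ)+1) ≤ av ((j:ℕ)+1) := by
        rw [havdef]; dsimp only; linarith
      exact this.trans h1.1
    · have : bv ((j:ℕ)+1) ≤ t ((j:ℕ)+1+1) := by
        rw [hbvdef]; dsimp only; linarith
      exact h1.2.trans this
  set F : (Fin (d-1) → ℝ) → ℝ := fun s =>
    Real.exp (-(B / (D - 1)) * ∑ j, s j) * ∏ p ∈ VP, (s p.2 - s p.1) with hFdef
  have hFcont : Continuous F := by
    rw [hFdef]
    apply Continuous.mul
    · exact Real.continuous_exp.comp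
        (continuous_const.mul (continuous_finset_sum _ fun j _ => continuous_apply j))
    · exact continuous_finset_prod _ fun p _ => (continuous_apply p.2).sub (continuous_apply p.1)
  have hboxC : IsCompact box := by
    rw [hboxdef]; exact isCompact_univ_pi fun j => isCompact_Icc
  have hKC : IsCompact K := by
    rw [hKdef]; exact isCompact_univ_pi fun j => isCompact_Icc
  have hKm : MeasurableSet K := by
    rw [hKdef]; exact MeasurableSet.univ_pi fun j => measurableSet_Icc
  have hboxm : MeasurableSet box := by
    rw [hboxdef]; exact MeasurableSet.univ_pi fun j => measurableSet_Icc
  have hFint : IntegrableOn F box := hFcont.continuousOn.integrableOn_compact hboxC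
  have hF0 : ∀ s ∈ box, 0 ≤ F s := by
    intro s hs
    rw [hboxdef, Set.mem_univ_pi] at hs
    rw [hFdef]
    apply mul_nonneg (Real.exp_nonneg _)
    apply Finset.prod_nonneg
    intro p hp
    rw [hVPdef, Finset.mem_filter] at hp
    have hlt : ((p.1 : Fin (d-1)) : ℕ) < ((p.2 : Fin (d-1)) : ℕ) := hp.2
    have h1 := (hs p.1).2
    have h2 := (hs p.2).1
    have h3 : t ((p.1:ℕ) + 2) ≤ t ((p.2:ℕ) + 1) :=
      tle _ _ (by omega) (by omega) (by have := (p.2).isLt; omega)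
    linarith [h1, h2]
  have hApos : ∀ p : Fin (d-1) × Fin (d-1), p ∈ VP →
      0 < av ((p.2:ℕ)+1) - bv ((p.1:ℕ)+1) := by
    intro p hp
    rw [hVPdef, Finset.mem_filter] at hp
    have hlt : ((p.1 : Fin (d-1)) : ℕ) < ((p.2 : Fin (d-1)) : ℕ) := hp.2
    have hδi := hδle ((p.1:ℕ)+1)
    have ht2 : t ((p.1:ℕ)+1+1) ≤ t ((p.2:ℕ)+1) :=
      tle _ _ (by omega) (by omega) (by have := (p.2).isLt; omega)
    have htlt : t ((p.1:ℕ)+1) < t ((p.2:ℕ)+1) :=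
      tlt _ _ (by omega) (by omega) (by have := (p.2).isLt; omega)
    have hδj := hδpos ((p.2:ℕ)+1) (by omega) (hjd p.2)
    rw [havdef, hbvdef]; dsimp only; linarith
  set m : ℝ := Real.exp (-(B / (D - 1)) * ∑ j : Fin (d-1), bv ((j:ℕ)+1)) *
      ∏ p ∈ VP, (av ((p.2:ℕ)+1) - bv ((p.1:ℕ)+1)) with hmdef
  have hmF : ∀ s ∈ K, m ≤ F s := by
    intro s hs
    rw [hKdef, Set.mem_univ_pi] at hs
    simp only [Set.mem_Icc] at hs
    rw [hmdef, hFdef]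
    have hsum : ∑ j, s j ≤ ∑ j : Fin (d-1), bv ((j:ℕ)+1) :=
      Finset.sum_le_sum fun j _ => (hs j).2
    have hBD : 0 ≤ B / (D - 1) := (div_pos hB hD1).le
    have hexp : Real.exp (-(B / (D - 1)) * ∑ j : Fin (d-1), bv ((j:ℕ)+1)) ≤
        Real.exp (-(B / (D - 1)) * ∑ j, s j) := by
      apply Real.exp_le_exp.2
      have := mul_le_mul_of_nonneg_left hsum hBD
      nlinarith
    have hprod : ∏ p ∈ VP, (av ((p.2:ℕ)+1) - bv ((p.1:ℕ)+1)) ≤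
        ∏ p ∈ VP, (s p.2 - s p.1) := by
      apply Finset.prod_le_prod
      · intro p hp; exact (hApos p hp).le
      · intro p hp; exact sub_le_sub (hs p.2).1 (hs p.1).2
    exact mul_le_mul hexp hprod
      (Finset.prod_nonneg fun p hp => (hApos p hp).le) (Real.exp_nonneg _)
  have hvolK : (volume K).toReal = ∏ j : Fin (d-1), (δ ((j:ℕ)+1) / 4) := by
    rw [hKdef, volume_pi_pi, ENNReal.toReal_prod]
    apply Finset.prod_congr rfl
    intro j _
    have hδj := hδpos ((j:ℕ)+1) (by omega) (hjd j)
    have h4 : bv ((j:ℕ)+1) - av ((j:ℕ)+1) = δ ((j:ℕ)+1) / 4 := by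
      rw [havdef, hbvdef]; dsimp only; ring
    rw [Real.volume_Icc, h4, ENNReal.toReal_ofReal (by linarith)]
  have hIb : m * ∏ j : Fin (d-1), (δ ((j:ℕ)+1) / 4) ≤ ∫ s in box, F s := by
    have h1 : m * (volume K).toReal ≤ ∫ s in K, F s :=
      by have := setIntegral_ge_of_const_le_real hKm (hKC.measure_ne_top) hmF (hFint.mono_set hsub)
         exact this
    have h2 : ∫ s in K, F s ≤ ∫ s in box, F s :=
      setIntegral_mono_set hFint
        (ae_restrict_of_forall_mem hboxm hF0) (HasSubset.Subset.eventuallyLE hsub)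
    rw [hvolK] at h1
    exact h1.trans h2
  -- the product identity
  set R : ℕ × ℕ → ℝ := fun p => if p.2 = p.1 + 1 then δ p.1 / 4
      else av (p.2 - 1) - bv p.1 with hRdef
  have hPident : ∏ p ∈ T, R p =
      (∏ j : Fin (d-1), (δ ((j:ℕ)+1) / 4)) *
      ∏ p ∈ VP, (av ((p.2:ℕ)+1) - bv ((p.1:ℕ)+1)) := by
    rw [← Finset.prod_filter_mul_prod_filter_not T (fun p => p.2 = p.1 + 1)]
    congr 1
    · refine (Finset.prod_bij'
        (fun (j : Fin (d-1)) _ => (((j:ℕ)+1, (j:ℕ)+2) : ℕ × ℕ))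
        (fun p hp => (⟨p.1 - 1, by
          rw [Finset.mem_filter, hmemT] at hp
          omega⟩ : Fin (d-1)))
        ?_ ?_ ?_ ?_ ?_).symm
      · intro j _
        rw [Finset.mem_filter, hmemT]
        have := j.isLt
        dsimp only
        omega
      · intro p _; exact Finset.mem_univ _
      · intro j _
        apply Fin.ext; simp
      · intro p hp
        rw [Finset.mem_filter, hmemT] at hp
        have h1 : p.1 - 1 + 1 = p.1 := by omega
        have h2 : p.1 - 1 + 2 = p.2 := by omega
        exact Prod.ext h1 h2
      · intro j _
        rw [hRdef]
        dsimp only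
        rw [if_pos rfl]
    · refine (Finset.prod_bij'
        (fun (q : Fin (d-1) × Fin (d-1)) _ => (((q.1:ℕ)+1, (q.2:ℕ)+2) : ℕ × ℕ))
        (fun p hp => ((⟨p.1 - 1, by
            rw [Finset.mem_filter, hmemT] at hp; omega⟩ : Fin (d-1)),
          (⟨p.2 - 2, by
            rw [Finset.mem_filter, hmemT] at hp; omega⟩ : Fin (d-1))))
        ?_ ?_ ?_ ?_ ?_).symm
      · intro q hq
        rw [hVPdef, Finset.mem_filter] at hq
        have hlt : ((q.1 : Fin (d-1)) : ℕ) < ((q.2 : Fin (d-1)) : ℕ) := hq.2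
        rw [Finset.mem_filter, hmemT]
        have h1 := (q.1).isLt
        have h2 := (q.2).isLt
        dsimp only
        omega
      · intro p hp
        rw [hVPdef, Finset.mem_filter]
        rw [Finset.mem_filter, hmemT] at hp
        refine ⟨Finset.mem_univ _, ?_⟩
        show ((⟨p.1 - 1, _⟩ : Fin (d-1))) < (⟨p.2 - 2, _⟩ : Fin (d-1))
        rw [Fin.lt_def]
        dsimp only
        omega
      · intro q hq
        rw [hVPdef, Finset.mem_filter] at hq
        have hlt : ((q.1 : Fin (d-1)) : ℕ) < ((q.2 : Fin (d-1)) : ℕ) := hq.2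
        apply Prod.ext
        · apply Fin.ext; dsimp only; omega
        · apply Fin.ext; dsimp only; omega
      · intro p hp
        rw [Finset.mem_filter, hmemT] at hp
        apply Prod.ext
        · dsimp only; omega
        · dsimp only; omega
      · intro q hq
        rw [hVPdef, Finset.mem_filter] at hq
        have hlt : ((q.1 : Fin (d-1)) : ℕ) < ((q.2 : Fin (d-1)) : ℕ) := hq.2
        rw [hRdef]
        dsimp only
        rw [if_neg (by omega)]
        congr 2
  -- per-pair lower bounds
  have hRpos : ∀ p ∈ T, 0 ≤ R p := by
    intro p hp
    rw [hmemT] at hp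
    obtain ⟨h1, h2, h3, h4, h5⟩ := hp
    rw [hRdef]
    dsimp only
    by_cases hadj : p.2 = p.1 + 1
    · rw [if_pos hadj]
      have := hδpos p.1 h1 (by omega)
      linarith
    · rw [if_neg hadj]
      have hv2 : p.1 + 2 ≤ p.2 := by omega
      have hδu := hδle p.1
      have hzz : t (p.1+1) ≤ t (p.2 - 1) := tle _ _ (by omega) (by omega) (by omega)
      have hδj := (hδpos (p.2 - 1) (by omega) (by omega)).le
      have hδu0 := (hδpos p.1 h1 (by omega)).le
      rw [havdef, hbvdef]; dsimp only
      linarith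
  have hy0 : ∀ p ∈ T, 0 ≤ t p.2 - t p.1 := by
    intro p hp
    rw [hmemT] at hp
    obtain ⟨h1, h2, h3, h4, h5⟩ := hp
    have := tlt p.1 p.2 h1 h5 h4
    linarith
  have hpair : ∀ p ∈ T,
      β / 4 * (t p.2 - t p.1) ≤ R p * Real.exp (β * B * (t p.2 - t p.1)) := by
    intro p hp
    rw [hmemT] at hp
    obtain ⟨h1, h2, h3, h4, h5⟩ := hp
    rw [hRdef]; dsimp only
    by_cases hadj : p.2 = p.1 + 1
    · rw [if_pos hadj, hadj]
      have hh : 0 < t (p.1 + 1) - t p.1 := sub_pos.2 (ht p.1 h1 (by omega))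
      have hpa := pairAdj hB hβ0 hβ1 hh
      rw [hδdef]; dsimp only
      exact hpa
    · rw [if_neg hadj]
      have hv2 : p.1 + 2 ≤ p.2 := by omega
      have hz0 : 0 ≤ t (p.2 - 1) - t p.1 :=
        sub_nonneg.2 (tle p.1 (p.2-1) h1 (by omega) (by omega))
      have hh0 : 0 < t p.2 - t (p.2 - 1) :=
        sub_pos.2 (tlt (p.2-1) p.2 (by omega) (by omega) h4)
      have hδv : δ (p.2 - 1) = min (t p.2 - t (p.2 - 1)) (1 / B) := by
        rw [hδdef]; dsimp only
        rw [show p.2 - 1 + 1 = p.2 from by omega]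
      have hδu : δ p.1 ≤ t (p.2 - 1) - t p.1 := by
        have h6 := hδle p.1
        have h7 : t (p.1 + 1) ≤ t (p.2 - 1) := tle _ _ (by omega) (by omega) (by omega)
        linarith
      have hδu0 : 0 < δ p.1 := hδpos p.1 h1 (by omega)
      have hA : (t (p.2 - 1) - t p.1 + min (t p.2 - t (p.2 - 1)) (1 / B)) / 4
          ≤ av (p.2 - 1) - bv p.1 := by
        rw [havdef, hbvdef]; dsimp only
        rw [← hδv]
        linarith
      have hpn := pairNon (B := B) (β := β) (z := t (p.2 - 1) - t p.1)
        (h := t p.2 - t (p.2 - 1)) hB hβ0 hβ1 hz0 hh0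
      have hzh : t p.2 - t p.1 = (t (p.2 - 1) - t p.1) + (t p.2 - t (p.2 - 1)) := by ring
      rw [hzh]
      exact hpn.trans (mul_le_mul_of_nonneg_right hA (Real.exp_nonneg _))
  -- sums
  set S : ℝ := ∑ k ∈ Finset.Icc 1 (d-1), (t d - t k) with hSdef
  have hS0 : 0 ≤ S := by
    rw [hSdef]
    apply Finset.sum_nonneg
    intro k hk
    rw [Finset.mem_Icc] at hk
    exact sub_nonneg.2 (tle k d hk.1 (by omega) le_rfl)
  have hSd1 : t d - t 1 ≤ S := by
    rw [hSdef]
    have h1 : (1:ℕ) ∈ Finset.Icc 1 (d-1) := by rw [Finset.mem_Icc]; omega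
    exact Finset.single_le_sum (f := fun k => t d - t k) (fun k hk => by
      rw [Finset.mem_Icc] at hk
      exact sub_nonneg.2 (tle k d hk.1 (by omega) le_rfl)) h1
  have hsumT : ∑ p ∈ T, β * B * (t p.2 - t p.1) ≤ α * B * S := by
    have step1 : ∑ p ∈ T, β * B * (t p.2 - t p.1) ≤ ∑ p ∈ T, β * B * (t d - t p.1) := by
      apply Finset.sum_le_sum
      intro p hp
      rw [hmemT] at hp
      obtain ⟨h1, h2, h3, h4, h5⟩ := hp
      have htp : t p.2 ≤ t d := tle p.2 d h3 h4 le_rfl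
      have hβB : (0:ℝ) ≤ β * B := by positivity
      exact mul_le_mul_of_nonneg_left (by linarith) hβB
    have hTsub : T ⊆ Finset.Icc 1 (d-1) ×ˢ Finset.Icc 1 d := by
      intro p hp
      rw [hmemT] at hp
      rw [Finset.mem_product, Finset.mem_Icc, Finset.mem_Icc]
      omega
    have step2 : ∑ p ∈ T, β * B * (t d - t p.1) ≤
        ∑ p ∈ Finset.Icc 1 (d-1) ×ˢ Finset.Icc 1 d, β * B * (t d - t p.1) := by
      apply Finset.sum_le_sum_of_subset_of_nonneg hTsub
      intro p hp _
      rw [Finset.mem_product, Finset.mem_Icc, Finset.mem_Icc] at hp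
      have ht1 : t p.1 ≤ t d := tle p.1 d hp.1.1 (by omega) le_rfl
      have hβB : (0:ℝ) ≤ β * B := by positivity
      exact mul_nonneg hβB (by linarith)
    have step3 : ∑ p ∈ Finset.Icc 1 (d-1) ×ˢ Finset.Icc 1 d, β * B * (t d - t p.1)
        = α * B * S := by
      rw [Finset.sum_product]
      have hrow : ∀ a : ℕ, (∑ _b ∈ Finset.Icc 1 d, β * B * (t d - t a))
          = D * (β * B * (t d - t a)) := by
        intro a
        rw [Finset.sum_const, Nat.card_Icc, show d + 1 - 1 = d from by omega,
          nsmul_eq_mul, hDdef]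
      have hDβ : D * β = α := by rw [hβdef]; field_simp
      calc ∑ a ∈ Finset.Icc 1 (d-1), ∑ _b ∈ Finset.Icc 1 d, β * B * (t d - t a)
          = ∑ a ∈ Finset.Icc 1 (d-1), D * (β * B * (t d - t a)) :=
            Finset.sum_congr rfl (fun a _ => hrow a)
        _ = α * B * S := by
            rw [hSdef, Finset.mul_sum]
            apply Finset.sum_congr rfl
            intro a _
            rw [← hDβ]
            ring
    linarith [step1, step2, step3]
  have hsplitsum : ∑ i ∈ Finset.Icc 1 d, t i = (∑ k ∈ Finset.Icc 1 (d-1), t k) + t d := by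
    have h := Finset.sum_Icc_succ_top (a := 1) (b := d - 1) (by omega) t
    rw [show d - 1 + 1 = d from by omega] at h
    exact h
  have hSeq : S = (D - 1) * t d - ∑ k ∈ Finset.Icc 1 (d-1), t k := by
    rw [hSdef, Finset.sum_sub_distrib, Finset.sum_const, Nat.card_Icc,
      show d - 1 + 1 - 1 = d - 1 from by omega, nsmul_eq_mul, hcast1]
  have hexpId : -(B / (D-1)) * ∑ k ∈ Finset.Icc 1 (d-1), t k
      = -(B / D) * ∑ i ∈ Finset.Icc 1 d, t i + 2 * α * B * S := by
    rw [hsplitsum, hSeq, hαdef]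
    field_simp
    ring
  have hbvsum : ∑ j : Fin (d-1), bv ((j:ℕ)+1)
      = (∑ k ∈ Finset.Icc 1 (d-1), t k) + ∑ k ∈ Finset.Icc 1 (d-1), (δ k / 2) := by
    rw [finShiftSum (d-1) bv, hbvdef]
    exact Finset.sum_add_distrib
  have hhalf : -(1/2 : ℝ) ≤ -(B / (D-1)) * ∑ k ∈ Finset.Icc 1 (d-1), (δ k / 2) := by
    have h1 : ∑ k ∈ Finset.Icc 1 (d-1), (δ k / 2) ≤ ∑ _k ∈ Finset.Icc 1 (d-1), (1 / (2*B)) := by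
      apply Finset.sum_le_sum
      intro k _
      have h := hδB k
      have e : (1:ℝ)/(2*B) = (1/B)/2 := by
        field_simp
      rw [e]
      linarith
    rw [Finset.sum_const, Nat.card_Icc, show d - 1 + 1 - 1 = d - 1 from by omega,
      nsmul_eq_mul, hcast1] at h1
    have h2 : (0:ℝ) ≤ B / (D-1) := (div_pos hB hD1).le
    have h3 := mul_le_mul_of_nonneg_left h1 h2
    have h4 : B / (D-1) * ((D-1) * (1/(2*B))) = 1/2 := by
      field_simp
    linarith [h3, h4]
  -- final assembly
  have hc1 : c ≤ α := min_le_left _ _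
  have hc2 : c ≤ Real.exp (-(1/2)) * (β/4) ^ (d*d) := min_le_right _ _
  have hβ4 : (0:ℝ) ≤ β/4 := by linarith
  have hpownn : (0:ℝ) ≤ (β/4) ^ T.card := pow_nonneg hβ4 _
  have hcardT : T.card ≤ d * d := by
    calc T.card ≤ ((Finset.Icc 1 d) ×ˢ (Finset.Icc 1 d)).card := by
          apply Finset.card_le_card
          rw [hTdef]
          exact Finset.filter_subset _ _
      _ = d * d := by
          rw [Finset.card_product, Nat.card_Icc, show d + 1 - 1 = d from by omega]
  have hpow : (β/4) ^ (d*d) ≤ (β/4) ^ T.card :=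
    pow_le_pow_of_le_one hβ4 (by linarith) hcardT
  have hP0 : 0 ≤ ∏ p ∈ T, (t p.2 - t p.1) := Finset.prod_nonneg hy0
  have hR0 : 0 ≤ ∏ p ∈ T, R p := Finset.prod_nonneg hRpos
  have hEc : Real.exp (c * B * (t d - t 1)) ≤ Real.exp (α * B * S) := by
    apply Real.exp_le_exp.2
    have h1 : 0 ≤ t d - t 1 := sub_nonneg.2 (tle 1 d le_rfl (by omega) le_rfl)
    have e1 : c * (B * (t d - t 1)) ≤ α * (B * (t d - t 1)) :=
      mul_le_mul_of_nonneg_right hc1 (mul_nonneg hB.le h1)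
    have e2 : (α * B) * (t d - t 1) ≤ (α * B) * S :=
      mul_le_mul_of_nonneg_left hSd1 (by positivity)
    linarith [e1, e2]
  have hcc : c ≤ Real.exp (-(1/2)) * (β/4) ^ T.card :=
    hc2.trans (mul_le_mul_of_nonneg_left hpow (Real.exp_nonneg _))
  have hcomb : Real.exp (-(B/(D-1)) * ∑ k ∈ Finset.Icc 1 (d-1), (δ k / 2)) *
      Real.exp (-(B/D) * ∑ i ∈ Finset.Icc 1 d, t i) * Real.exp (α*B*S) * Real.exp (α * B * S)
      = Real.exp (-(B/(D-1)) * ∑ j : Fin (d-1), bv ((j:ℕ)+1)) := by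
    rw [← Real.exp_add, ← Real.exp_add, ← Real.exp_add, hbvsum]
    congr 1
    rw [mul_add, hexpId]
    ring
  calc c * Real.exp (-(B/D) * ∑ i ∈ Finset.Icc 1 d, t i) * Real.exp (c * B * (t d - t 1)) *
        ∏ p ∈ T, (t p.2 - t p.1)
      ≤ (Real.exp (-(1/2)) * (β/4) ^ T.card) *
          Real.exp (-(B/D) * ∑ i ∈ Finset.Icc 1 d, t i) *
          Real.exp (α * B * S) * ∏ p ∈ T, (t p.2 - t p.1) := by
        apply mul_le_mul_of_nonneg_right _ hP0
        apply mul_le_mul (mul_le_mul_of_nonneg_right hcc (Real.exp_nonneg _)) hEc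
          (Real.exp_nonneg _)
        apply mul_nonneg (mul_nonneg (Real.exp_nonneg _) hpownn) (Real.exp_nonneg _)
    _ = Real.exp (-(1/2)) * Real.exp (-(B/D) * ∑ i ∈ Finset.Icc 1 d, t i) *
          Real.exp (α*B*S) * ((β/4) ^ T.card * ∏ p ∈ T, (t p.2 - t p.1)) := by ring
    _ = Real.exp (-(1/2)) * Real.exp (-(B/D) * ∑ i ∈ Finset.Icc 1 d, t i) *
          Real.exp (α*B*S) * ∏ p ∈ T, (β/4 * (t p.2 - t p.1)) := by
        rw [Finset.prod_mul_distrib, Finset.prod_const]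
    _ ≤ Real.exp (-(1/2)) * Real.exp (-(B/D) * ∑ i ∈ Finset.Icc 1 d, t i) *
          Real.exp (α*B*S) * ∏ p ∈ T, (R p * Real.exp (β * B * (t p.2 - t p.1))) := by
        apply mul_le_mul_of_nonneg_left _ (by positivity)
        exact Finset.prod_le_prod (fun p hp => mul_nonneg (by linarith) (hy0 p hp)) hpair
    _ = Real.exp (-(1/2)) * Real.exp (-(B/D) * ∑ i ∈ Finset.Icc 1 d, t i) *
          Real.exp (α*B*S) *
          ((∏ p ∈ T, R p) * Real.exp (∑ p ∈ T, β * B * (t p.2 - t p.1))) := by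
        rw [Finset.prod_mul_distrib, Real.exp_sum]
    _ ≤ Real.exp (-(1/2)) * Real.exp (-(B/D) * ∑ i ∈ Finset.Icc 1 d, t i) *
          Real.exp (α*B*S) * ((∏ p ∈ T, R p) * Real.exp (α * B * S)) := by
        apply mul_le_mul_of_nonneg_left _ (by positivity)
        exact mul_le_mul_of_nonneg_left (Real.exp_le_exp.2 hsumT) hR0
    _ ≤ Real.exp (-(B/(D-1)) * ∑ k ∈ Finset.Icc 1 (d-1), (δ k / 2)) *
          Real.exp (-(B/D) * ∑ i ∈ Finset.Icc 1 d, t i) *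
          Real.exp (α*B*S) * ((∏ p ∈ T, R p) * Real.exp (α * B * S)) := by
        apply mul_le_mul_of_nonneg_right _ (mul_nonneg hR0 (Real.exp_nonneg _))
        apply mul_le_mul_of_nonneg_right _ (Real.exp_nonneg _)
        apply mul_le_mul_of_nonneg_right _ (Real.exp_nonneg _)
        exact Real.exp_le_exp.2 hhalf
    _ = m * ∏ j : Fin (d-1), (δ ((j:ℕ)+1) / 4) := by
        rw [hmdef]
        calc Real.exp (-(B/(D-1)) * ∑ k ∈ Finset.Icc 1 (d-1), (δ k / 2)) *
              Real.exp (-(B/D) * ∑ i ∈ Finset.Icc 1 d, t i) *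
              Real.exp (α*B*S) * ((∏ p ∈ T, R p) * Real.exp (α * B * S))
            = (Real.exp (-(B/(D-1)) * ∑ k ∈ Finset.Icc 1 (d-1), (δ k / 2)) *
              Real.exp (-(B/D) * ∑ i ∈ Finset.Icc 1 d, t i) *
              Real.exp (α*B*S) * Real.exp (α * B * S)) * (∏ p ∈ T, R p) := by ring
          _ = Real.exp (-(B/(D-1)) * ∑ j : Fin (d-1), bv ((j:ℕ)+1)) * (∏ p ∈ T, R p) := by
              rw [hcomb]
          _ = (Real.exp (-(B/(D-1)) * ∑ j : Fin (d-1), bv ((j:ℕ)+1)) *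
              ∏ p ∈ VP, (av ((p.2:ℕ)+1) - bv ((p.1:ℕ)+1))) *
              ∏ j : Fin (d-1), (δ ((j:ℕ)+1) / 4) := by
              rw [hPident]
              ring
    _ ≤ ∫ s in box, F s := hIb
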